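/- Let n, θ, ρ be natural numbers with n > 0 and θ > 0, let f_in : ℕ → ℕ and f_ex : ℕ → ℕ, and let s : ℕ → ℕ satisfy: s 1 = 1, and for every m with 1 < m ≤ ρ·θ, s m = s (m−1) + f_ex ((m−1)/θ) + 1 if θ divides m−1, and s m = s (m−1) + f_in (m−1) + 1 if θ does not divide m−1. Then for every m with 1 ≤ m ≤ ρ·θ, s m ≡ m + Σ_{i ∈ Finset.Ico 1 m, θ ∤ i} f_in i + Σ_{i ∈ Finset.Ico 1 m, θ ∣ i} f_ex (i/θ) (mod n). -/
import Mathlib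


/-- Theorem 1 of the paper: the node sequence `s` of a Flower code with multiple
rings, satisfying `s 1 = 1` and the jump recursion
`s m = s (m-1) + f_ex ((m-1)/θ) + 1` when `θ ∣ (m-1)` and
`s m = s (m-1) + f_in (m-1) + 1` otherwise (for `1 < m ≤ ρθ`), satisfies the
closed-form congruence
`s m ≡ m + Σ_{1 ≤ i < m, θ ∤ i} f_in i + Σ_{1 ≤ i < m, θ ∣ i} f_ex (i/θ) (mod n)`. -/
theorem flower_node_sequence_closed_form (n θ ρ : ℕ) (hn : 0 < n) (hθ : 0 < θ)
    (f_in f_ex : ℕ → ℕ) (s : ℕ → ℕ) (hs1 : s 1 = 1)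
    (hrec_ex : ∀ m, 1 < m → m ≤ ρ * θ → θ ∣ (m - 1) →
      s m = s (m - 1) + f_ex ((m - 1) / θ) + 1)
    (hrec_in : ∀ m, 1 < m → m ≤ ρ * θ → ¬ θ ∣ (m - 1) →
      s m = s (m - 1) + f_in (m - 1) + 1) :
    ∀ m, 1 ≤ m → m ≤ ρ * θ →
      s m ≡ (m + ∑ i ∈ (Finset.Ico 1 m).filter (fun i => ¬ θ ∣ i), f_in i
               + ∑ i ∈ (Finset.Ico 1 m).filter (fun i => θ ∣ i), f_ex (i / θ)) [MOD n] := by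
  have key : ∀ m, 1 ≤ m → m ≤ ρ * θ →
      s m = (m + ∑ i ∈ (Finset.Ico 1 m).filter (fun i => ¬ θ ∣ i), f_in i
               + ∑ i ∈ (Finset.Ico 1 m).filter (fun i => θ ∣ i), f_ex (i / θ)) := by
    intro m hm
    induction m, hm using Nat.le_induction with
    | base => intro _; simp [hs1]
    | succ m hm ih =>
      intro hle
      have hmle : m ≤ ρ * θ := le_of_lt (lt_of_lt_of_le (Nat.lt_succ_self m) hle)
      have ihm := ih hmle
      have hins : ∀ g : ℕ → Prop, ∀ [DecidablePred g],
          (Finset.Ico 1 (m + 1)).filter g = if g m then insert m ((Finset.Ico 1 m).filter g)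
            else (Finset.Ico 1 m).filter g := by
        intro g _
        rw [Nat.Ico_succ_right_eq_insert_Ico hm, Finset.filter_insert]
      have hnm : m ∉ Finset.Ico 1 m := by simp
      by_cases hd : θ ∣ m
      · have hrec := hrec_ex (m + 1) (by omega) hle (by simpa using hd)
        simp only [Nat.add_sub_cancel] at hrec
        rw [hrec, ihm, hins, hins]
        rw [if_pos hd, if_neg (not_not_intro hd), Finset.sum_insert (by simp [hnm] : m ∉ (Finset.Ico 1 m).filter (fun i => θ ∣ i))]
        ring
      · have hrec := hrec_in (m + 1) (by omega) hle (by simpa using hd)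
        simp only [Nat.add_sub_cancel] at hrec
        rw [hrec, ihm, hins, hins]
        rw [if_neg hd, if_pos hd, Finset.sum_insert (by simp [hnm] : m ∉ (Finset.Ico 1 m).filter (fun i => ¬ θ ∣ i))]
        ring
  intro m h1 h2
  rw [key m h1 h2]
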